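/- Let α > 0 and β > 0, let h : [0,1] → ℝ be Lipschitz with constant L, let Bh = E h(Z) for Z with the Beta distribution B(α,β), and let f(w) = w^{−α}(1−w)^{−β} ∫₀^w u^{α−1}(1−u)^{β−1}(h(u) − Bh) du for w ∈ (0,1). Then sup_{w ∈ (0,1)} |f(w)| ≤ 2L/(α+β). -/

import Mathlib

open MeasureTheory intervalIntegral

open Set


lemma cpow_eq_aux (a b x : ℝ) (hx0 : 0 ≤ x) (hx1 : x ≤ 1) :
    ((x ^ (a-1) * (1-x) ^ (b-1) : ℝ) : ℂ)
      = (x:ℂ) ^ ((a:ℂ)-1) * (1-(x:ℂ)) ^ ((b:ℂ)-1) := by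
  rw [Complex.ofReal_mul, Complex.ofReal_cpow hx0, Complex.ofReal_cpow (by linarith)]
  push_cast
  ring_nf

lemma qInt (a b : ℝ) (ha : 0 < a) (hb : 0 < b) :
    IntervalIntegrable (fun x : ℝ => x ^ (a-1) * (1-x) ^ (b-1)) volume 0 1 := by
  have hc := Complex.betaIntegral_convergent (u := a) (v := b) (by simpa) (by simpa)
  rw [intervalIntegrable_iff_integrableOn_Ioc_of_le zero_le_one] at hc ⊢
  have h2 : IntegrableOn
      (fun x : ℝ => ((x:ℂ) ^ ((a:ℂ)-1) * (1-(x:ℂ)) ^ ((b:ℂ)-1)).re) (Set.Ioc 0 1) := hc.re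
  refine h2.congr_fun (fun x hx => ?_) measurableSet_Ioc
  beta_reduce; rw [← cpow_eq_aux a b x hx.1.le hx.2, Complex.ofReal_re]

lemma qVal (a b : ℝ) (ha : 0 < a) (hb : 0 < b) :
    ∫ x in (0:ℝ)..1, x ^ (a-1) * (1-x) ^ (b-1)
      = Real.Gamma a * Real.Gamma b / Real.Gamma (a+b) := by
  have h1 := Complex.Gamma_mul_Gamma_eq_betaIntegral (s := (a:ℂ)) (t := (b:ℂ))
    (by simpa) (by simpa)
  have h2 : ((∫ x in (0:ℝ)..1, x ^ (a-1) * (1-x) ^ (b-1) : ℝ) : ℂ)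
      = Complex.betaIntegral a b := by
    rw [← intervalIntegral.integral_ofReal]
    refine intervalIntegral.integral_congr (fun x hx => ?_)
    rw [Set.uIcc_of_le (zero_le_one)] at hx
    exact cpow_eq_aux a b x hx.1 hx.2
  have h3 : ((Real.Gamma a * Real.Gamma b / Real.Gamma (a+b) : ℝ) : ℂ)
      = Complex.Gamma a * Complex.Gamma b / Complex.Gamma (a+b) := by
    push_cast [Complex.Gamma_ofReal]
    rw [← Complex.ofReal_add, Complex.Gamma_ofReal]
  have hne : Complex.Gamma ((a:ℂ) + b) ≠ 0 :=
    Complex.Gamma_ne_zero_of_re_pos (by simp; positivity)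
  apply Complex.ofReal_injective
  rw [h2, h3]
  field_simp [h1]
  rw [h1]; ring

lemma qMoment (a b : ℝ) (ha : 0 < a) (hb : 0 < b) :
    ∫ x in (0:ℝ)..1, x * (x ^ (a-1) * (1-x) ^ (b-1))
      = a / (a+b) * (Real.Gamma a * Real.Gamma b / Real.Gamma (a+b)) := by
  have h1 : ∫ x in (0:ℝ)..1, x * (x ^ (a-1) * (1-x) ^ (b-1))
      = ∫ x in (0:ℝ)..1, x ^ ((a+1)-1) * (1-x) ^ (b-1) := by
    refine intervalIntegral.integral_congr (fun x hx => ?_)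
    rw [Set.uIcc_of_le (zero_le_one)] at hx
    rcases eq_or_lt_of_le hx.1 with h0 | h0
    · rw [← h0]
      simp [Real.zero_rpow ha.ne']
    · rw [add_sub_cancel_right,
        show x ^ a = x ^ (a-1) * x by rw [← Real.rpow_add_one h0.ne', sub_add_cancel]]
      ring
  rw [h1, qVal (a+1) b (by linarith) hb, Real.Gamma_add_one ha.ne',
    show a + 1 + b = (a+b) + 1 by ring, Real.Gamma_add_one (by positivity : a+b ≠ 0)]
  have g1 : Real.Gamma (a+b) ≠ 0 := (Real.Gamma_pos_of_pos (by linarith)).ne'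
  field_simp

lemma qSubInt (a b : ℝ) (ha : 0 < a) (hb : 0 < b) {c d : ℝ}
    (hc : c ∈ Set.Icc (0:ℝ) 1) (hd : d ∈ Set.Icc (0:ℝ) 1) :
    IntervalIntegrable (fun x : ℝ => x ^ (a-1) * (1-x) ^ (b-1)) volume c d := by
  refine (qInt a b ha hb).mono_set (Set.uIcc_subset_uIcc ?_ ?_) <;>
    rw [Set.uIcc_of_le (zero_le_one : (0:ℝ) ≤ 1)]
  · exact hc
  · exact hd

lemma keyDeriv (a b c : ℝ) (ha : 0 < a) (hb : 0 < b) {x : ℝ} (hx0 : 0 < x) (hx1 : x < 1) :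
    HasDerivAt (fun u : ℝ => c/(a+b) * (u ^ a * (1-u) ^ b))
      ((x ^ (a-1) * (1-x) ^ (b-1)) * (a/(a+b)*c - c*x)) x := by
  have d1 : HasDerivAt (fun u : ℝ => u ^ a) (a * x ^ (a-1)) x :=
    Real.hasDerivAt_rpow_const (Or.inl hx0.ne')
  have d2 : HasDerivAt (fun u : ℝ => (1-u) ^ b) (-(b * (1-x) ^ (b-1))) x := by
    have d3 : HasDerivAt (fun u : ℝ => 1 - u) (-1) x := (hasDerivAt_id x).const_sub 1
    have d4 : HasDerivAt (fun y : ℝ => y ^ b) (b * (1-x) ^ (b-1)) (1-x) :=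
      Real.hasDerivAt_rpow_const (Or.inl (by linarith : (1:ℝ)-x ≠ 0))
    have := d4.comp x d3
    simpa [Function.comp_def] using this
  have dm := (d1.mul d2).const_mul (c/(a+b))
  refine dm.congr_deriv ?_
  rw [show x ^ a = x ^ (a-1) * x by
        rw [← Real.rpow_add_one hx0.ne', sub_add_cancel],
      show (1-x) ^ b = (1-x) ^ (b-1) * (1-x) by
        rw [← Real.rpow_add_one (by linarith : (1:ℝ)-x ≠ 0), sub_add_cancel]]
  have he : a + b ≠ 0 := by positivity
  field_simp
  ring

lemma keyIdentity (a b c : ℝ) (ha : 0 < a) (hb : 0 < b) {w : ℝ}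
    (hw0 : 0 < w) (hw1 : w < 1) :
    (a/(a+b)*c) * (∫ u in (0:ℝ)..w, u ^ (a-1) * (1-u) ^ (b-1))
      - c * (∫ u in (0:ℝ)..w, u * (u ^ (a-1) * (1-u) ^ (b-1)))
      = c/(a+b) * (w ^ a * (1-w) ^ b) := by
  have hwm : w ∈ Set.Icc (0:ℝ) 1 := ⟨hw0.le, hw1.le⟩
  have h0m : (0:ℝ) ∈ Set.Icc (0:ℝ) 1 := by norm_num
  have hq : IntervalIntegrable (fun x : ℝ => x ^ (a-1) * (1-x) ^ (b-1)) volume 0 w :=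
    qSubInt a b ha hb h0m hwm
  have hm : IntervalIntegrable (fun x : ℝ => x * (x ^ (a-1) * (1-x) ^ (b-1))) volume 0 w :=
    hq.continuousOn_mul (continuous_id.continuousOn : ContinuousOn (fun x : ℝ => x) (Set.uIcc 0 w))
  have hint : IntervalIntegrable
      (fun x : ℝ => (x ^ (a-1) * (1-x) ^ (b-1)) * (a/(a+b)*c - c*x)) volume 0 w :=
    hq.mul_continuousOn (by fun_prop)
  have hL : ∫ u in (0:ℝ)..w, (u ^ (a-1) * (1-u) ^ (b-1)) * (a/(a+b)*c - c*u)
      = (a/(a+b)*c) * (∫ u in (0:ℝ)..w, u ^ (a-1) * (1-u) ^ (b-1))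
        - c * (∫ u in (0:ℝ)..w, u * (u ^ (a-1) * (1-u) ^ (b-1))) := by
    rw [← intervalIntegral.integral_const_mul, ← intervalIntegral.integral_const_mul,
      ← intervalIntegral.integral_sub (hq.const_mul _) (hm.const_mul _)]
    refine intervalIntegral.integral_congr (fun x _ => ?_)
    ring
  rw [← hL]
  have hcw : ContinuousAt (fun u : ℝ => c/(a+b) * (u ^ a * (1-u) ^ b)) w := by
    apply ContinuousAt.mul continuousAt_const
    apply ContinuousAt.mul
    · exact Real.continuousAt_rpow_const w a (Or.inl hw0.ne')
    · exact (Real.continuousAt_rpow_const (1-w) b (Or.inl (by linarith))).comp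
        ((continuous_const.sub continuous_id).continuousAt)
  have hc0 : ContinuousAt (fun u : ℝ => c/(a+b) * (u ^ a * (1-u) ^ b)) 0 := by
    apply ContinuousAt.mul continuousAt_const
    apply ContinuousAt.mul
    · exact Real.continuousAt_rpow_const 0 a (Or.inr ha.le)
    · exact (Real.continuousAt_rpow_const (1-0) b (Or.inl (by norm_num))).comp
        ((continuous_const.sub continuous_id).continuousAt)
  have := intervalIntegral.integral_eq_sub_of_hasDerivAt_of_tendsto hw0
    (f := fun u : ℝ => c/(a+b) * (u ^ a * (1-u) ^ b))
    (fun x hx => keyDeriv a b c ha hb hx.1 (lt_trans hx.2 hw1)) hint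
    (hc0.tendsto.mono_left nhdsWithin_le_nhds)
    (hcw.tendsto.mono_left nhdsWithin_le_nhds)
  rw [this]
  simp [Real.zero_rpow ha.ne']

/-- Expectation `E h(Z)` for `Z ∼ B(a,b)`, the Beta distribution with density
`x^{a-1} (1-x)^{b-1} / B(a,b)` on `[0,1]`, where `B(a,b) = Γ(a)Γ(b)/Γ(a+b)`. -/
noncomputable def betaExp (a b : ℝ) (h : ℝ → ℝ) : ℝ :=
  ∫ x in Set.Ioo (0 : ℝ) 1,
    (Real.Gamma (a + b) / (Real.Gamma a * Real.Gamma b))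
      * x ^ (a - 1) * (1 - x) ^ (b - 1) * h x

/-- For `α, β > 0` and `h` Lipschitz with constant `L` on
`[0,1]`, the solution
`f(w) = w^{-α} (1-w)^{-β} ∫₀^w u^{α-1} (1-u)^{β-1} (h(u) - Bh) du`
of the Beta Stein equation satisfies `sup_{w ∈ (0,1)} |f(w)| ≤ 2L/(α+β)`. -/
theorem stmt_13 (α β : ℝ) (hα : 0 < α) (hβ : 0 < β)
    (L : ℝ) (hL : 0 ≤ L)
    (h : ℝ → ℝ)
    (hLip : ∀ x ∈ Set.Icc (0 : ℝ) 1, ∀ y ∈ Set.Icc (0 : ℝ) 1,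
      |h x - h y| ≤ L * |x - y|)
    (Bh : ℝ) (hBh : Bh = betaExp α β h)
    (f : ℝ → ℝ)
    (hfdef : ∀ w ∈ Set.Ioo (0 : ℝ) 1,
      f w = w ^ (-α) * (1 - w) ^ (-β)
        * ∫ u in (0 : ℝ)..w, u ^ (α - 1) * (1 - u) ^ (β - 1) * (h u - Bh)) :
    ∀ w ∈ Set.Ioo (0 : ℝ) 1, |f w| ≤ 2 * L / (α + β) := by
  have he : (0:ℝ) < α + β := by linarith
  have hΓα := Real.Gamma_pos_of_pos hα
  have hΓβ := Real.Gamma_pos_of_pos hβ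
  have hΓe := Real.Gamma_pos_of_pos he
  have hBv : (0:ℝ) < Real.Gamma α * Real.Gamma β / Real.Gamma (α+β) := by positivity
  set Bv : ℝ := Real.Gamma α * Real.Gamma β / Real.Gamma (α+β) with hBvdef
  have h0m : (0:ℝ) ∈ Set.Icc (0:ℝ) 1 := by norm_num
  have h1m : (1:ℝ) ∈ Set.Icc (0:ℝ) 1 := by norm_num
  have hsub : ∀ {c d : ℝ}, c ∈ Set.Icc (0:ℝ) 1 → d ∈ Set.Icc (0:ℝ) 1 →
      Set.uIcc c d ⊆ Set.Icc (0:ℝ) 1 := by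
    intro c d hc hd
    rw [show Set.Icc (0:ℝ) 1 = Set.uIcc (0:ℝ) 1 from (Set.uIcc_of_le zero_le_one).symm]
    exact Set.uIcc_subset_uIcc (by rwa [Set.uIcc_of_le zero_le_one])
      (by rwa [Set.uIcc_of_le zero_le_one])
  -- continuity of h on [0,1]
  have hch : ContinuousOn h (Set.Icc 0 1) := by
    have : LipschitzOnWith L.toNNReal h (Set.Icc 0 1) := by
      refine LipschitzOnWith.of_dist_le_mul (fun x hx y hy => ?_)
      rw [Real.dist_eq, Real.dist_eq, Real.coe_toNNReal L hL]
      exact hLip x hx y hy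
    exact this.continuousOn
  have hcg : ContinuousOn (fun u => h u - Bh) (Set.Icc 0 1) :=
    hch.sub continuousOn_const
  have hq01 := qInt α β hα hβ
  have hqg01 : IntervalIntegrable
      (fun u : ℝ => u ^ (α-1) * (1-u) ^ (β-1) * (h u - Bh)) volume 0 1 :=
    hq01.mul_continuousOn (hcg.mono (hsub h0m h1m))
  have hqh01 : IntervalIntegrable
      (fun u : ℝ => u ^ (α-1) * (1-u) ^ (β-1) * h u) volume 0 1 :=
    hq01.mul_continuousOn (hch.mono (hsub h0m h1m))
  -- value of Bh
  have hBE : Bh = (Real.Gamma (α+β) / (Real.Gamma α * Real.Gamma β))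
      * ∫ u in (0:ℝ)..1, u ^ (α-1) * (1-u) ^ (β-1) * h u := by
    rw [hBh]
    unfold betaExp
    rw [← MeasureTheory.integral_Ioc_eq_integral_Ioo,
      ← intervalIntegral.integral_of_le zero_le_one,
      ← intervalIntegral.integral_const_mul]
    exact intervalIntegral.integral_congr (fun x _ => by ring)
  have hqh : ∫ u in (0:ℝ)..1, u ^ (α-1) * (1-u) ^ (β-1) * h u = Bv * Bh := by
    rw [hBE, hBvdef]
    field_simp
  -- mean zero
  have hz : ∫ u in (0:ℝ)..1, u ^ (α-1) * (1-u) ^ (β-1) * (h u - Bh) = 0 := by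
    have e : ∫ u in (0:ℝ)..1, u ^ (α-1) * (1-u) ^ (β-1) * (h u - Bh)
        = ∫ u in (0:ℝ)..1, (u ^ (α-1) * (1-u) ^ (β-1) * h u
            - u ^ (α-1) * (1-u) ^ (β-1) * Bh) :=
      intervalIntegral.integral_congr (fun x _ => by ring)
    rw [e, intervalIntegral.integral_sub hqh01 (hq01.mul_const _),
      intervalIntegral.integral_mul_const, hqh, qVal α β hα hβ, ← hBvdef]
    ring
  have hqnn : ∀ {u : ℝ}, 0 ≤ u → u ≤ 1 → (0:ℝ) ≤ u ^ (α-1) * (1-u) ^ (β-1) :=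
    fun h1 h2 => mul_nonneg (Real.rpow_nonneg h1 _)
      (Real.rpow_nonneg (by linarith) _)
  -- main part
  intro w hw
  obtain ⟨hw0, hw1⟩ := hw
  have hwm : w ∈ Set.Icc (0:ℝ) 1 := ⟨hw0.le, hw1.le⟩
  have hq0w := qSubInt α β hα hβ h0m hwm
  have hqw1 := qSubInt α β hα hβ hwm h1m
  have hqg0w : IntervalIntegrable
      (fun u : ℝ => u ^ (α-1) * (1-u) ^ (β-1) * (h u - Bh)) volume 0 w :=
    hq0w.mul_continuousOn (hcg.mono (hsub h0m hwm))
  have hqgw1 : IntervalIntegrable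
      (fun u : ℝ => u ^ (α-1) * (1-u) ^ (β-1) * (h u - Bh)) volume w 1 :=
    hqw1.mul_continuousOn (hcg.mono (hsub hwm h1m))
  have hm0w : IntervalIntegrable
      (fun u : ℝ => u * (u ^ (α-1) * (1-u) ^ (β-1))) volume 0 w :=
    hq0w.continuousOn_mul (Continuous.continuousOn continuous_id)
  have hmw1 : IntervalIntegrable
      (fun u : ℝ => u * (u ^ (α-1) * (1-u) ^ (β-1))) volume w 1 :=
    hqw1.continuousOn_mul (Continuous.continuousOn continuous_id)
  set Gw := ∫ u in (0:ℝ)..w, u ^ (α-1) * (1-u) ^ (β-1) with hGwdef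
  set Tw := ∫ u in w..(1:ℝ), u ^ (α-1) * (1-u) ^ (β-1) with hTwdef
  set Gm := ∫ u in (0:ℝ)..w, u * (u ^ (α-1) * (1-u) ^ (β-1)) with hGmdef
  set Mw1 := ∫ u in w..(1:ℝ), u * (u ^ (α-1) * (1-u) ^ (β-1)) with hMw1def
  set Iw := ∫ u in (0:ℝ)..w, u ^ (α-1) * (1-u) ^ (β-1) * (h u - Bh) with hIwdef
  set Jw := ∫ u in w..(1:ℝ), u ^ (α-1) * (1-u) ^ (β-1) * (h u - Bh) with hJwdef
  have hsplitG : Gw + Tw = Bv := by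
    rw [hGwdef, hTwdef, intervalIntegral.integral_add_adjacent_intervals hq0w hqw1,
      qVal α β hα hβ]
  have hsplitM : Gm + Mw1 = α/(α+β) * Bv := by
    rw [hGmdef, hMw1def, intervalIntegral.integral_add_adjacent_intervals hm0w hmw1,
      qMoment α β hα hβ]
  have hsplitI : Iw + Jw = 0 := by
    rw [hIwdef, hJwdef, intervalIntegral.integral_add_adjacent_intervals hqg0w hqgw1, hz]
  have hGw0 : 0 ≤ Gw :=
    intervalIntegral.integral_nonneg hw0.le
      (fun u hu => hqnn hu.1 (hu.2.trans hw1.le))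
  have hTw0 : 0 ≤ Tw :=
    intervalIntegral.integral_nonneg hw1.le
      (fun u hu => hqnn (hw0.le.trans hu.1) hu.2)
  -- key estimate on [0,w]
  have key1 : |Iw - (h w - Bh) * Gw| ≤ L * (w * Gw - Gm) := by
    have e1 : ∫ u in (0:ℝ)..w, (u ^ (α-1) * (1-u) ^ (β-1) * (h u - Bh)
          - u ^ (α-1) * (1-u) ^ (β-1) * (h w - Bh))
        = Iw - (h w - Bh) * Gw := by
      rw [intervalIntegral.integral_sub hqg0w (hq0w.mul_const _),
        intervalIntegral.integral_mul_const]
      ring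
    calc |Iw - (h w - Bh) * Gw|
        = |∫ u in (0:ℝ)..w, (u ^ (α-1) * (1-u) ^ (β-1) * (h u - Bh)
            - u ^ (α-1) * (1-u) ^ (β-1) * (h w - Bh))| := by rw [e1]
      _ ≤ ∫ u in (0:ℝ)..w, |u ^ (α-1) * (1-u) ^ (β-1) * (h u - Bh)
            - u ^ (α-1) * (1-u) ^ (β-1) * (h w - Bh)| :=
          intervalIntegral.abs_integral_le_integral_abs hw0.le
      _ ≤ ∫ u in (0:ℝ)..w, u ^ (α-1) * (1-u) ^ (β-1) * (L * (w - u)) := by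
          refine intervalIntegral.integral_mono_on hw0.le
            ((hqg0w.sub (hq0w.mul_const _)).abs)
            (hq0w.mul_continuousOn (by fun_prop)) (fun u hu => ?_)
          have hu1 : u ≤ 1 := hu.2.trans hw1.le
          rw [← mul_sub, abs_mul,
            abs_of_nonneg (hqnn hu.1 hu1),
            sub_sub_sub_cancel_right]
          refine mul_le_mul_of_nonneg_left ?_ (hqnn hu.1 hu1)
          have hb := hLip u ⟨hu.1, hu1⟩ w hwm
          rwa [abs_sub_comm u w, abs_of_nonneg
            (by linarith [hu.2] : (0:ℝ) ≤ w - u)] at hb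
      _ = L * (w * Gw - Gm) := by
          rw [show (fun u : ℝ => u ^ (α-1) * (1-u) ^ (β-1) * (L * (w - u)))
              = (fun u : ℝ => (L*w) * (u ^ (α-1) * (1-u) ^ (β-1))
                  - L * (u * (u ^ (α-1) * (1-u) ^ (β-1)))) from funext (fun u => by ring),
            intervalIntegral.integral_sub (hq0w.const_mul _) (hm0w.const_mul _),
            intervalIntegral.integral_const_mul, intervalIntegral.integral_const_mul,
            ← hGwdef, ← hGmdef]
          ring
  -- key estimate on [w,1]
  have key2 : |Iw + (h w - Bh) * Tw| ≤ L * (Mw1 - w * Tw) := by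
    have e2 : ∫ u in w..(1:ℝ), (u ^ (α-1) * (1-u) ^ (β-1) * (h u - Bh)
          - u ^ (α-1) * (1-u) ^ (β-1) * (h w - Bh))
        = Jw - (h w - Bh) * Tw := by
      rw [intervalIntegral.integral_sub hqgw1 (hqw1.mul_const _),
        intervalIntegral.integral_mul_const]
      ring
    have eI : Iw + (h w - Bh) * Tw = -(Jw - (h w - Bh) * Tw) := by
      have : Iw = -Jw := by linarith
      rw [this]; ring
    calc |Iw + (h w - Bh) * Tw|
        = |∫ u in w..(1:ℝ), (u ^ (α-1) * (1-u) ^ (β-1) * (h u - Bh)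
            - u ^ (α-1) * (1-u) ^ (β-1) * (h w - Bh))| := by rw [eI, abs_neg, e2]
      _ ≤ ∫ u in w..(1:ℝ), |u ^ (α-1) * (1-u) ^ (β-1) * (h u - Bh)
            - u ^ (α-1) * (1-u) ^ (β-1) * (h w - Bh)| :=
          intervalIntegral.abs_integral_le_integral_abs hw1.le
      _ ≤ ∫ u in w..(1:ℝ), u ^ (α-1) * (1-u) ^ (β-1) * (L * (u - w)) := by
          refine intervalIntegral.integral_mono_on hw1.le
            ((hqgw1.sub (hqw1.mul_const _)).abs)
            (hqw1.mul_continuousOn (by fun_prop)) (fun u hu => ?_)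
          have hu0 : (0:ℝ) ≤ u := hw0.le.trans hu.1
          rw [← mul_sub, abs_mul,
            abs_of_nonneg (hqnn hu0 hu.2),
            sub_sub_sub_cancel_right]
          refine mul_le_mul_of_nonneg_left ?_ (hqnn hu0 hu.2)
          have hb := hLip u ⟨hu0, hu.2⟩ w hwm
          rwa [abs_of_nonneg (by linarith [hu.1] : (0:ℝ) ≤ u - w)] at hb
      _ = L * (Mw1 - w * Tw) := by
          rw [show (fun u : ℝ => u ^ (α-1) * (1-u) ^ (β-1) * (L * (u - w)))
              = (fun u : ℝ => L * (u * (u ^ (α-1) * (1-u) ^ (β-1)))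
                  - (L*w) * (u ^ (α-1) * (1-u) ^ (β-1))) from funext (fun u => by ring),
            intervalIntegral.integral_sub (hmw1.const_mul _) (hqw1.const_mul _),
            intervalIntegral.integral_const_mul, intervalIntegral.integral_const_mul,
            ← hTwdef, ← hMw1def]
          ring
  -- combine
  have hcomb : Bv * Iw = Tw * (Iw - (h w - Bh) * Gw) + Gw * (Iw + (h w - Bh) * Tw) := by
    have : Tw = Bv - Gw := by linarith
    rw [this]; ring
  have habs : Bv * |Iw| ≤ L * (Bv/(α+β) * (w ^ α * (1-w) ^ β)) := by
    have h1 : Bv * |Iw| ≤ Tw * |Iw - (h w - Bh) * Gw| + Gw * |Iw + (h w - Bh) * Tw| := by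
      rw [show Bv * |Iw| = |Bv * Iw| by
        rw [abs_mul, abs_of_pos hBv]]
      rw [hcomb]
      refine (abs_add_le _ _).trans ?_
      rw [abs_mul, abs_mul, abs_of_nonneg hTw0, abs_of_nonneg hGw0]
    have h2 : Tw * |Iw - (h w - Bh) * Gw| + Gw * |Iw + (h w - Bh) * Tw|
        ≤ Tw * (L * (w * Gw - Gm)) + Gw * (L * (Mw1 - w * Tw)) := by
      gcongr
    have h3 : Tw * (L * (w * Gw - Gm)) + Gw * (L * (Mw1 - w * Tw))
        = L * ((α/(α+β)*Bv) * Gw - Bv * Gm) := by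
      have e1 : Tw = Bv - Gw := by linarith
      have e2 : Mw1 = α/(α+β)*Bv - Gm := by linarith
      rw [e1, e2]; ring
    have h4 := keyIdentity α β Bv hα hβ hw0 hw1
    rw [← hGwdef, ← hGmdef] at h4
    calc Bv * |Iw| ≤ Tw * (L * (w * Gw - Gm)) + Gw * (L * (Mw1 - w * Tw)) :=
          h1.trans h2
      _ = L * ((α/(α+β)*Bv) * Gw - Bv * Gm) := h3
      _ = L * (Bv/(α+β) * (w ^ α * (1-w) ^ β)) := by rw [h4]
  have hIwb : |Iw| ≤ L/(α+β) * (w ^ α * (1-w) ^ β) := by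
    have h5 : Bv * |Iw| ≤ Bv * (L/(α+β) * (w ^ α * (1-w) ^ β)) := by
      calc Bv * |Iw| ≤ L * (Bv/(α+β) * (w ^ α * (1-w) ^ β)) := habs
        _ = Bv * (L/(α+β) * (w ^ α * (1-w) ^ β)) := by ring
    exact (mul_le_mul_iff_right₀ hBv).mp h5
  -- conclude
  rw [hfdef w ⟨hw0, hw1⟩, ← hIwdef]
  have hr1 : (0:ℝ) ≤ w ^ (-α) := Real.rpow_nonneg hw0.le _
  have hr2 : (0:ℝ) ≤ (1-w) ^ (-β) := Real.rpow_nonneg (by linarith) _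
  rw [abs_mul, abs_mul, abs_of_nonneg hr1, abs_of_nonneg hr2]
  have hc1 : w ^ (-α) * w ^ α = 1 := by
    rw [← Real.rpow_add hw0]; simp
  have hc2 : (1-w) ^ (-β) * (1-w) ^ β = 1 := by
    rw [← Real.rpow_add (by linarith : (0:ℝ) < 1-w)]; simp
  calc w ^ (-α) * (1-w) ^ (-β) * |Iw|
      ≤ w ^ (-α) * (1-w) ^ (-β) * (L/(α+β) * (w ^ α * (1-w) ^ β)) := by
        refine mul_le_mul_of_nonneg_left hIwb (by positivity)
    _ = L/(α+β) * ((w ^ (-α) * w ^ α) * ((1-w) ^ (-β) * (1-w) ^ β)) := by ring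
    _ = L/(α+β) := by rw [hc1, hc2]; ring
    _ ≤ 2 * L / (α+β) := by
        rw [div_le_div_iff₀ he he]
        nlinarith
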